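/- For every natural number i, the Hirzebruch–Jung continued fraction whose entries are: one entry -(4+2i), then seven entries -2, then one entry -12, then (2+2i) entries -2, equals -(28+18i)²/(9(28+18i) - 1). (This is the uniform continued-fraction identity behind the family of plumbings C₍₂₈₊₁₈ᵢ,₉₎, whose boundaries are the lens spaces L((28+18i)², 9(28+18i)-1).) -/
import Mathlib


/-- The Hirzebruch–Jung continued fraction of a list of integers:
`hj [a] = a` and `hj (a :: l) = a - 1 / hj l`. -/
def hj : List ℤ → ℚ
  | [] => 0
  | [a] => (a : ℚ)
  | a :: b :: l => (a : ℚ) - 1 / hj (b :: l)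

lemma hj_cons (a b : ℤ) (l : List ℤ) :
    hj (a :: b :: l) = (a : ℚ) - 1 / hj (b :: l) := rfl

/-- One step of the continued-fraction recursion, in closed form. -/
lemma hj_step (c A B : ℚ) (hA : A ≠ 0) :
    c - 1 / (-A / B) = (c * A + B) / A := by
  rw [one_div_div, div_neg, sub_neg_eq_add]
  field_simp

lemma hj_rep (n : ℕ) :
    hj (List.replicate (n + 1) (-2)) = -((n : ℚ) + 2) / ((n : ℚ) + 1) := by
  induction n with
  | zero => norm_num [hj, List.replicate]
  | succ n ih =>
    rw [List.replicate_succ, List.replicate_succ]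
    rw [hj_cons, ← List.replicate_succ, ih]
    have h2 : ((n : ℚ) + 2) ≠ 0 := by positivity
    have h3 : ((n : ℚ) + 1 + 1) ≠ 0 := by positivity
    rw [hj_step _ _ _ h2]
    push_cast
    rw [div_eq_div_iff h2 h3]
    ring

/-- For every natural number `i`, the Hirzebruch–Jung continued fraction with
entries `-(4+2i)`, then seven `-2`'s, then `-12`, then `(2+2i)` entries `-2`,
equals `-(28+18i)²/(9(28+18i)-1)`: the uniform identity behind the family of
plumbings `C₍₂₈₊₁₈ᵢ,₉₎` with boundaries `L((28+18i)², 9(28+18i)-1)`. -/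
theorem hj_C_family (i : ℕ) :
    hj ([-(4 + 2 * (i : ℤ))] ++ List.replicate 7 (-2) ++ [-12] ++
        List.replicate (2 + 2 * i) (-2)) =
      -((28 + 18 * (i : ℚ)) ^ 2) / (9 * (28 + 18 * (i : ℚ)) - 1) := by
  set x : ℚ := (i : ℚ) with hxdef
  have hx : (0 : ℚ) ≤ x := by simp [hxdef]
  have hrep : (2 + 2 * i) = (1 + 2 * i) + 1 := by omega
  have hl : ([-(4 + 2 * (i : ℤ))] ++ List.replicate 7 (-2) ++ [-12] ++
        List.replicate (2 + 2 * i) (-2)) =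
      -(4 + 2 * (i : ℤ)) :: -2 :: -2 :: -2 :: -2 :: -2 :: -2 :: -2 :: -12 ::
        -2 :: List.replicate (1 + 2 * i) (-2) := by
    rw [hrep, List.replicate_succ]
    rfl
  rw [hl]
  have d0 : (2 * x + 2) ≠ 0 := by positivity
  have d1 : (2 * x + 3) ≠ 0 := by positivity
  have d2 : (22 * x + 34) ≠ 0 := by positivity
  have d3 : (42 * x + 65) ≠ 0 := by positivity
  have d4 : (62 * x + 96) ≠ 0 := by positivity
  have d5 : (82 * x + 127) ≠ 0 := by positivity
  have d6 : (102 * x + 158) ≠ 0 := by positivity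
  have d7 : (122 * x + 189) ≠ 0 := by positivity
  have d8 : (142 * x + 220) ≠ 0 := by positivity
  have d9 : (162 * x + 251) ≠ 0 := by positivity
  have d10 : (9 * (28 + 18 * x) - 1) ≠ 0 := by
    have h : 9 * (28 + 18 * x) - 1 = 162 * x + 251 := by ring
    rw [h]; exact d9
  have h0 : hj ((-2 : ℤ) :: List.replicate (1 + 2 * i) (-2)) =
      -(2 * x + 3) / (2 * x + 2) := by
    rw [← List.replicate_succ, hj_rep]
    push_cast
    rw [div_eq_div_iff (by positivity) d0]
    ring
  have h1 : hj ((-12 : ℤ) :: -2 :: List.replicate (1 + 2 * i) (-2)) =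
      -(22 * x + 34) / (2 * x + 3) := by
    rw [hj_cons, h0, hj_step _ _ _ d1]
    push_cast
    rw [div_eq_div_iff d1 d1]; ring
  have h2 : hj ((-2 : ℤ) :: -12 :: -2 :: List.replicate (1 + 2 * i) (-2)) =
      -(42 * x + 65) / (22 * x + 34) := by
    rw [hj_cons, h1, hj_step _ _ _ d2]
    push_cast
    rw [div_eq_div_iff d2 d2]; ring
  have h3 : hj ((-2 : ℤ) :: -2 :: -12 :: -2 :: List.replicate (1 + 2 * i) (-2)) =
      -(62 * x + 96) / (42 * x + 65) := by
    rw [hj_cons, h2, hj_step _ _ _ d3]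
    push_cast
    rw [div_eq_div_iff d3 d3]; ring
  have h4 : hj ((-2 : ℤ) :: -2 :: -2 :: -12 :: -2 :: List.replicate (1 + 2 * i) (-2)) =
      -(82 * x + 127) / (62 * x + 96) := by
    rw [hj_cons, h3, hj_step _ _ _ d4]
    push_cast
    rw [div_eq_div_iff d4 d4]; ring
  have h5 : hj ((-2 : ℤ) :: -2 :: -2 :: -2 :: -12 :: -2 ::
        List.replicate (1 + 2 * i) (-2)) =
      -(102 * x + 158) / (82 * x + 127) := by
    rw [hj_cons, h4, hj_step _ _ _ d5]
    push_cast
    rw [div_eq_div_iff d5 d5]; ring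
  have h6 : hj ((-2 : ℤ) :: -2 :: -2 :: -2 :: -2 :: -12 :: -2 ::
        List.replicate (1 + 2 * i) (-2)) =
      -(122 * x + 189) / (102 * x + 158) := by
    rw [hj_cons, h5, hj_step _ _ _ d6]
    push_cast
    rw [div_eq_div_iff d6 d6]; ring
  have h7 : hj ((-2 : ℤ) :: -2 :: -2 :: -2 :: -2 :: -2 :: -12 :: -2 ::
        List.replicate (1 + 2 * i) (-2)) =
      -(142 * x + 220) / (122 * x + 189) := by
    rw [hj_cons, h6, hj_step _ _ _ d7]
    push_cast
    rw [div_eq_div_iff d7 d7]; ring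
  have h8 : hj ((-2 : ℤ) :: -2 :: -2 :: -2 :: -2 :: -2 :: -2 :: -12 :: -2 ::
        List.replicate (1 + 2 * i) (-2)) =
      -(162 * x + 251) / (142 * x + 220) := by
    rw [hj_cons, h7, hj_step _ _ _ d8]
    push_cast
    rw [div_eq_div_iff d8 d8]; ring
  rw [hj_cons, h8, hj_step _ _ _ d9]
  push_cast
  rw [div_eq_div_iff d9 d10]
  ring
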